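/- Let c ∈ ℝ and let v : ℝ → ℝ be a C² solution of v'' + c·v' + f(v) = 0 on ℝ with v(z) → 0 as z → -∞, v(z) → 1 as z → +∞, and such that v'(z) → 0 as z → ±∞ and v' ∈ L²(ℝ). Then c · ∫_{-∞}^{∞} v'(z)² dz = -F(1), where F(r) = ∫₀^r f(s) ds. In particular, if F(1) < 0 then c > 0. -/

import Mathlib

open Filter Set MeasureTheory

theorem stmt_1 (f : ℝ → ℝ) (c : ℝ) (v : ℝ → ℝ)
    (hf : Continuous f)
    (hv : ContDiff ℝ 2 v)
    (hode : ∀ z, deriv (deriv v) z + c * deriv v z + f (v z) = 0)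
    (hbot : Tendsto v atBot (nhds 0)) (htop : Tendsto v atTop (nhds 1))
    (hdbot : Tendsto (deriv v) atBot (nhds 0))
    (hdtop : Tendsto (deriv v) atTop (nhds 0))
    (hL2 : Integrable (fun z => (deriv v z) ^ 2)) :
    c * ∫ z : ℝ, (deriv v z) ^ 2 = -(∫ s in (0:ℝ)..1, f s) ∧
      ((∫ s in (0:ℝ)..1, f s) < 0 → 0 < c) := by
  set F : ℝ → ℝ := fun x => ∫ s in (0:ℝ)..x, f s with hF
  set G : ℝ → ℝ := fun z => (1/2) * (deriv v z) ^ 2 + F (v z) with hG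
  -- derivative facts
  have hv1 : ∀ z, HasDerivAt v (deriv v z) z := fun z =>
    (hv.differentiable (by norm_num)).differentiableAt.hasDerivAt
  have hv2 : ∀ z, HasDerivAt (deriv v) (deriv (deriv v) z) z := by
    intro z
    have h21 : ContDiff ℝ (1+1 : ℕ) v := by exact_mod_cast hv
    have : ContDiff ℝ 1 (deriv v) := (contDiff_succ_iff_deriv.mp h21).2.2
    exact (this.differentiable one_ne_zero).differentiableAt.hasDerivAt
  have hFd : ∀ x, HasDerivAt F (f x) x := by
    intro x
    exact intervalIntegral.integral_hasDerivAt_right (hf.intervalIntegrable 0 x)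
      hf.aestronglyMeasurable.stronglyMeasurableAtFilter hf.continuousAt
  have hGd : ∀ z, HasDerivAt G (-c * (deriv v z) ^ 2) z := by
    intro z
    have h2 : HasDerivAt (fun z => F (v z)) (f (v z) * deriv v z) z :=
      (hFd (v z)).comp z (hv1 z)
    have h0 := (((hv2 z).pow 2).const_mul (1/2)).add h2
    refine h0.congr_deriv ?_
    have h := hode z
    have hfv : f (v z) = -(deriv (deriv v) z) - c * deriv v z := by linarith
    rw [hfv]
    push_cast
    ring
  have hFcont : Continuous F :=
    intervalIntegral.continuous_primitive (fun a b => hf.intervalIntegrable a b) 0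
  -- limits
  have hGbot : Tendsto G atBot (nhds 0) := by
    have h1 : Tendsto (fun z => (1/2) * (deriv v z)^2) atBot (nhds 0) := by
      have := ((hdbot.mul hdbot)).const_mul (1/2)
      simpa [pow_two] using this
    have h2 : Tendsto (fun z => F (v z)) atBot (nhds (F 0)) :=
      (hFcont.continuousAt.tendsto).comp hbot
    have hF0 : F 0 = 0 := by simp [hF]
    have := h1.add h2
    simpa [hG, hF0] using this
  have hGtop : Tendsto G atTop (nhds (F 1)) := by
    have h1 : Tendsto (fun z => (1/2) * (deriv v z)^2) atTop (nhds 0) := by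
      have := ((hdtop.mul hdtop)).const_mul (1/2)
      simpa [pow_two] using this
    have h2 : Tendsto (fun z => F (v z)) atTop (nhds (F 1)) :=
      (hFcont.continuousAt.tendsto).comp htop
    have := h1.add h2
    simpa [hG] using this
  have hint : Integrable (fun z => -c * (deriv v z) ^ 2) := hL2.const_mul (-c)
  have key : ∫ z : ℝ, -c * (deriv v z) ^ 2 = F 1 - 0 :=
    MeasureTheory.integral_of_hasDerivAt_of_tendsto hGd hint hGbot hGtop
  rw [MeasureTheory.integral_const_mul, sub_zero] at key
  have main : c * ∫ z : ℝ, (deriv v z) ^ 2 = -F 1 := by linarith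
  refine ⟨main, fun hFneg => ?_⟩
  have hI : 0 ≤ ∫ z : ℝ, (deriv v z) ^ 2 :=
    integral_nonneg fun z => sq_nonneg _
  by_contra hc
  push_neg at hc
  nlinarith
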